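/- Let a, r ∈ ℂ with r ≠ 0 and set b = -a (i.e., a + b = 0). Let S, E, I : ℝ → ℂ be differentiable functions satisfying S'(t) = -r·S(t)·I(t), E'(t) = r·S(t)·I(t) - b·E(t), I'(t) = b·E(t) - a·I(t) for all t ∈ ℝ. Then the function t ↦ -(a/r)·S(t) + (1/2)·(S(t) + E(t) + I(t))² - (1/2)·I(t)² is constant on ℝ, i.e., F₃(S,E,I) = -(a/r)·S + (1/2)·(S+E+I)² - (1/2)·I² is an additional first integral of the reduced SEIR model when a + b = 0. -/

import Mathlib

/-- When `b = -a` (i.e. `a + b = 0`), the reduced SEIR model has the additional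
first integral `F₃(S,E,I) = -(a/r)·S + (1/2)(S+E+I)² - (1/2)I²`. -/
theorem seir_extra_first_integral_of_a_add_b_eq_zero (a r : ℂ) (hr : r ≠ 0)
    (S E I : ℝ → ℂ)
    (hS : ∀ t : ℝ, HasDerivAt S (-r * S t * I t) t)
    (hE : ∀ t : ℝ, HasDerivAt E (r * S t * I t - (-a) * E t) t)
    (hI : ∀ t : ℝ, HasDerivAt I ((-a) * E t - a * I t) t) :
    ∀ t s : ℝ,
      -(a / r) * S t + (1 / 2) * (S t + E t + I t) ^ 2 - (1 / 2) * (I t) ^ 2 =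
      -(a / r) * S s + (1 / 2) * (S s + E s + I s) ^ 2 - (1 / 2) * (I s) ^ 2 := by
  set F : ℝ → ℂ := fun t =>
    -(a / r) * S t + (1 / 2) * (S t + E t + I t) ^ 2 - (1 / 2) * (I t) ^ 2 with hF
  have key : ∀ t, HasDerivAt F 0 t := by
    intro t
    have h1 : HasDerivAt (fun t => -(a / r) * S t) (-(a / r) * (-r * S t * I t)) t :=
      (hS t).const_mul _
    have hsum : HasDerivAt (fun t => S t + E t + I t)
        ((-r * S t * I t) + (r * S t * I t - (-a) * E t) + ((-a) * E t - a * I t)) t :=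
      ((hS t).add (hE t)).add (hI t)
    have h2' := (hsum.mul hsum).const_mul (1 / 2 : ℂ)
    have h3' := ((hI t).mul (hI t)).const_mul (1 / 2 : ℂ)
    simp only [← pow_two] at h2' h3'
    have := (h1.add h2').sub h3'
    convert this using 1
    · rfl
    · rfl
    · have hqr : a / r * r = a := div_mul_cancel₀ a hr
      linear_combination (-(S t * I t)) * hqr
  intro t s
  have : ∀ u v : ℝ, F u = F v := by
    intro u v
    have hconst := is_const_of_deriv_eq_zero
      (fun x => (key x).differentiableAt) (fun x => (key x).deriv)
    exact hconst u v
  exact this t s
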